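/- Let N = 2^n, let ε ∈ (0,1), and let K = (k_1, …, k_d) be a sequence of integers in {0, …, N−1} with d ≥ 1 satisfying: for every integer l with 1 ≤ l ≤ N−1, |(1/d)·∑_{i=1}^{d} cos(2π k_i l / N)| < ε. Then the quantum hash function ψ_K is ε-resistant: for all M₁, M₂ ∈ {0, …, N−1} with M₁ ≠ M₂, |⟪ψ_K(M₁), ψ_K(M₂)⟫| < ε. -/

import Mathlib

open scoped BigOperators

/-- The quantum hash of a message `M ∈ {0, …, N−1}` determined by the
sequence `K = (k_1, …, k_d)` of integers in `{0, …, N−1}`. -/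
noncomputable def quantumHash (N d : ℕ) (K : Fin d → ℕ) (M : ℕ) :
    EuclideanSpace ℂ (Fin d × Fin 2) := WithLp.toLp 2 fun p =>
  if p.2 = (0 : Fin 2)
  then ((1 / Real.sqrt d) * Real.cos (2 * Real.pi * (K p.1) * M / N) : ℝ)
  else ((1 / Real.sqrt d) * Real.sin (2 * Real.pi * (K p.1) * M / N) : ℝ)

/-- If the normalized cosine sums of `K` at every `l ∈ {1, …, N−1}` are `< ε`,
then the quantum hash function `ψ_K` is `ε`-resistant: the hashes of any two
distinct messages are `ε`-orthogonal. -/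
theorem quantumHash_eps_resistant
    (n : ℕ) (N : ℕ) (hN : N = 2 ^ n) (ε : ℝ) (hε : ε ∈ Set.Ioo (0 : ℝ) 1)
    (d : ℕ) (hd : 1 ≤ d) (K : Fin d → ℕ) (hK : ∀ i, K i < N)
    (hsmall : ∀ l : ℕ, 1 ≤ l → l ≤ N - 1 →
      |(1 / (d : ℝ)) * ∑ i, Real.cos (2 * Real.pi * (K i) * l / N)| < ε) :
    ∀ M₁ M₂ : ℕ, M₁ < N → M₂ < N → M₁ ≠ M₂ →
      ‖(inner ℂ (quantumHash N d K M₁) (quantumHash N d K M₂) : ℂ)‖ < ε := by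
  intro M₁ M₂ hM₁ hM₂ hne
  have hd0 : (0:ℝ) < d := by exact_mod_cast hd
  set a : Fin d → ℝ := fun i => 2 * Real.pi * (K i) * M₁ / N with ha
  set b : Fin d → ℝ := fun i => 2 * Real.pi * (K i) * M₂ / N with hb
  have hinner : (inner ℂ (quantumHash N d K M₁) (quantumHash N d K M₂) : ℂ)
      = (((1/(d:ℝ)) * ∑ i, Real.cos (a i - b i) : ℝ) : ℂ) := by
    have key : ∀ i : Fin d,
        (1/Real.sqrt d * Real.cos (a i)) * (1/Real.sqrt d * Real.cos (b i))
        + (1/Real.sqrt d * Real.sin (a i)) * (1/Real.sqrt d * Real.sin (b i))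
        = (1/(d:ℝ)) * Real.cos (a i - b i) := by
      intro i
      rw [Real.cos_sub]
      have h2 : Real.sqrt d * Real.sqrt d = d := Real.mul_self_sqrt hd0.le
      field_simp
      rw [Real.sq_sqrt hd0.le]; ring
    simp only [PiLp.inner_apply, quantumHash, PiLp.toLp_apply, RCLike.inner_apply',
      Fintype.sum_prod_type, Fin.sum_univ_two, reduceIte,
      one_ne_zero, if_false, eq_self_iff_true, if_true, Complex.conj_ofReal,
      ← Complex.ofReal_mul, ← Complex.ofReal_add, ← Complex.ofReal_sum,
      Complex.ofReal_inj]
    rw [Finset.mul_sum]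
    exact Finset.sum_congr rfl fun i _ => key i
  rw [hinner, Complex.norm_real, Real.norm_eq_abs]
  obtain ⟨l, hl1, hlN, hcos⟩ :
      ∃ l : ℕ, 1 ≤ l ∧ l ≤ N - 1 ∧
        ∀ i, Real.cos (a i - b i) = Real.cos (2 * Real.pi * (K i) * l / N) := by
    rcases hne.lt_or_gt with h | h
    · refine ⟨M₂ - M₁, by omega, by omega, fun i => ?_⟩
      have hl : ((M₂ - M₁ : ℕ) : ℝ) = (M₂ : ℝ) - M₁ := by
        push_cast [Nat.cast_sub h.le]; ring
      have : a i - b i = -(2 * Real.pi * (K i) * ((M₂ - M₁ : ℕ) : ℝ) / N) := by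
        rw [hl, ha, hb]; ring
      rw [this, Real.cos_neg]
    · refine ⟨M₁ - M₂, by omega, by omega, fun i => ?_⟩
      have hl : ((M₁ - M₂ : ℕ) : ℝ) = (M₁ : ℝ) - M₂ := by
        push_cast [Nat.cast_sub h.le]; ring
      have : a i - b i = 2 * Real.pi * (K i) * ((M₁ - M₂ : ℕ) : ℝ) / N := by
        rw [hl, ha, hb]; ring
      rw [this]
  have := hsmall l hl1 hlN
  simpa [hcos] using this
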